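/- With η = 1 − α/λ, the DoD-stabilized update on the cut cells equals the exact-advection-and-average update: if u^n is piecewise constant on the mesh and is exactly advected by distance βΔt = λh and then averaged over each cell, then (for λ ≤ 1/2 and α < λ) the cell averages on k1 and k2 are exactly u^n_{k−1} and (1 − λ/(1−α)) u^n_{k2} + (α/(1−α)) u^n_{k1} + ((λ−α)/(1−α)) u^n_{k−1}, respectively. -/

import Mathlib

open intervalIntegral
open MeasureTheory

lemma const_on_Ico (g : ℝ → ℝ) {a b c : ℝ} (hab : a ≤ b)
    (hg : ∀ y ∈ Set.Ico a b, g y = c) :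
    IntervalIntegrable g volume a b ∧ ∫ y in a..b, g y = (b - a) * c := by
  have hae : g =ᵐ[volume.restrict (Set.Ioc a b)] fun _ => c := by
    refine (ae_restrict_iff' measurableSet_Ioc).mpr ?_
    have hb : ∀ᵐ y : ℝ ∂volume, y ≠ b := by
      refine (MeasureTheory.ae_iff).mpr ?_
      simp
    filter_upwards [hb] with y hy hmem
    exact hg y ⟨le_of_lt hmem.1, lt_of_le_of_ne hmem.2 hy⟩
  have hint : IntervalIntegrable g volume a b := by
    rw [intervalIntegrable_iff_integrableOn_Ioc_of_le hab]
    refine (MeasureTheory.Integrable.congr ?_ hae.symm)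
    exact (integrableOn_const_iff (by simp)).mpr (Or.inr (by rw [Real.volume_Ioc]; exact ENNReal.ofReal_lt_top))
  refine ⟨hint, ?_⟩
  rw [intervalIntegral.integral_of_le hab, MeasureTheory.integral_congr_ae hae]
  rw [MeasureTheory.setIntegral_const, Real.volume_real_Ioc_of_le hab, smul_eq_mul]

/-- With `η = 1 − α/λ` the DoD update equals exact advection followed by averaging:
if `f` is piecewise constant with values `ukm1`, `uk1`, `uk2` on the cells
`[x−h, x)`, `[x, x+αh)`, `[x+αh, x+h)`, then the averages of `f(· − λh)` over the two
cut cells are `ukm1` and `(1 − λ/(1−α)) uk2 + (α/(1−α)) uk1 + ((λ−α)/(1−α)) ukm1`. -/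
theorem dod_exact_advection_average (h α lam x ukm1 uk1 uk2 : ℝ) (f : ℝ → ℝ)
    (hh : 0 < h) (hα0 : 0 < α) (hcut : α < lam) (hlam : lam ≤ 1/2)
    (hfm : ∀ y ∈ Set.Ico (x - h) x, f y = ukm1)
    (hf1 : ∀ y ∈ Set.Ico x (x + α * h), f y = uk1)
    (hf2 : ∀ y ∈ Set.Ico (x + α * h) (x + h), f y = uk2) :
    (1 / (α * h)) * ∫ y in x..(x + α * h), f (y - lam * h) = ukm1 ∧
    (1 / ((1 - α) * h)) * ∫ y in (x + α * h)..(x + h), f (y - lam * h)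
      = (1 - lam / (1 - α)) * uk2 + (α / (1 - α)) * uk1
        + ((lam - α) / (1 - α)) * ukm1 := by
  have hα1 : α < 1/2 := lt_of_lt_of_le hcut hlam
  constructor
  · rw [intervalIntegral.integral_comp_sub_right _ (lam * h)]
    have h1 := const_on_Ico f (a := x - lam * h) (b := x + α * h - lam * h) (c := ukm1)
      (by nlinarith) (fun y hy => hfm y ⟨by nlinarith [hy.1], by nlinarith [hy.2]⟩)
    rw [h1.2]
    field_simp
    ring
  · rw [intervalIntegral.integral_comp_sub_right _ (lam * h)]
    have h1 := const_on_Ico f (a := x + α * h - lam * h) (b := x) (c := ukm1)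
      (by nlinarith) (fun y hy => hfm y ⟨by nlinarith [hy.1], hy.2⟩)
    have h2 := const_on_Ico f (a := x) (b := x + α * h) (c := uk1)
      (by nlinarith) (fun y hy => hf1 y hy)
    have h3 := const_on_Ico f (a := x + α * h) (b := x + h - lam * h) (c := uk2)
      (by nlinarith) (fun y hy => hf2 y ⟨hy.1, by nlinarith [hy.2]⟩)
    have hsplit1 := intervalIntegral.integral_add_adjacent_intervals
      (h1.1.trans h2.1) h3.1
    have hsplit2 := intervalIntegral.integral_add_adjacent_intervals h1.1 h2.1
    rw [← hsplit2] at hsplit1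
    rw [← hsplit1, h1.2, h2.2, h3.2]
    have hne1 : (1:ℝ) - α ≠ 0 := by nlinarith
    have hne2 : h ≠ 0 := ne_of_gt hh
    field_simp
    ring
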